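/- Let L|K be a nontrivial Kummer extension of degree p with defect as described, and let α₁, α₂ ∈ 𝒮 with w(α₁ − 1) ≤ w(α₂ − 1). Then A[α₁′] ⊆ A[α₂′]. -/

import Mathlib

/-!
Mathlib's multiplicative valuation convention is used: `v x ≤ 1` means `x ∈ A`.
The paper's additive hypothesis `v(α₁ − 1) ≤ v(α₂ − 1)` becomes
`w (α₂ - 1) ≤ w (α₁ - 1)` for Mathlib's multiplicative valuations.
-/

/-- The set `𝔄` of elements `h ∈ K` such that the solutions of `X^p = h`
generate `L` over `K`. -/
def kummerSet (p : ℕ) (K L : Type*) [Field K] [Field L] [Algebra K L] : Set K :=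
  {h : K | ∃ β : L, β ^ p = algebraMap K L h ∧ IntermediateField.adjoin K {β} = ⊤}

/-- The extension of valued fields has (nontrivial) defect: since
`e·f·d = [L:K] = p`, this is equivalent to `e = f = 1`, i.e. the value group
and the residue field do not grow. -/
def HasDefect {K L : Type*} [Field K] [Field L] [Algebra K L]
    {Γ : Type*} [LinearOrderedCommGroupWithZero Γ]
    (v : Valuation K Γ) (w : Valuation L Γ) : Prop :=
  (∀ y : L, y ≠ 0 → ∃ x : K, x ≠ 0 ∧ w y = v x) ∧
    (∀ y : L, w y ≤ 1 → ∃ x : K, v x ≤ 1 ∧ w (y - algebraMap K L x) < 1)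

/-- The set `𝒮 = {α ∈ L | α^p = h ∈ 𝔄, h ∈ A×, h − 1 ∈ m_A}`. -/
def kummerGens (p : ℕ) {K : Type*} (L : Type*) [Field K] [Field L] [Algebra K L]
    {Γ : Type*} [LinearOrderedCommGroupWithZero Γ] (v : Valuation K Γ) : Set L :=
  {β : L | ∃ h ∈ kummerSet p K L, v h = 1 ∧ v (h - 1) < 1 ∧ algebraMap K L h = β ^ p}

/-- `α' = γ·(α−1)/𝔷`. -/
def primed {K : Type*} {L : Type*} [Field K] [Field L] [Algebra K L]
    (ζ : K) (γ : K) (β : L) : L :=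
  algebraMap K L γ * (β - 1) / algebraMap K L (ζ - 1)

/-- The subring `A[x]` of `L` generated by (the image of) `A` and `x`. -/
def adjoinRing {K : Type*} (L : Type*) [Field K] [Field L] [Algebra K L]
    {Γ : Type*} [LinearOrderedCommGroupWithZero Γ] (v : Valuation K Γ) (x : L) : Subring L :=
  Subring.closure ((algebraMap K L '' (v.valuationSubring : Set K)) ∪ {x})


section Auxiliary

open Polynomial IntermediateField


section auxx
variable {K : Type*} [Field K] {Γ : Type*} [LinearOrderedCommGroupWithZero Γ]

lemma aux_val_natCast_le_one {R : Type*} [CommRing R] (v : Valuation R Γ) (n : ℕ) :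
    v (n : R) ≤ 1 := by
  induction n with
  | zero => simp
  | succ n ih =>
    push_cast
    exact le_trans (v.map_add _ _) (max_le ih (le_of_eq v.map_one))

lemma aux_pow_eq_one {x : Γ} {n : ℕ} (hx : x ≠ 0) (hn : n ≠ 0) (h : x ^ n = 1) : x = 1 := by
  lift x to Γˣ using isUnit_iff_ne_zero.2 hx with u
  have hu : u ^ n = 1 := by
    ext
    push_cast [h]
    rfl
  norm_cast
  rcases lt_trichotomy u 1 with h1 | h1 | h1
  · exact absurd hu (ne_of_lt (pow_lt_one' h1 hn))
  · exact h1
  · exact absurd hu (ne_of_gt (one_lt_pow' h1 hn))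

lemma aux_gamma {x u₁ u₂ a b e C : Γ} (m : ℕ)
    (h1 : u₁ * a = e) (h2 : u₂ * b = e) (he : e ≠ 0) (hC : C ≤ 1) (hba : b ≤ a) (hb1 : b ≤ 1)
    (hx : x * u₂ ^ (m + 1) = u₁ * C * e ^ m) : x ≤ 1 := by
  have ha : a ≠ 0 := by rintro rfl; rw [mul_zero] at h1; exact he h1.symm
  have hb : b ≠ 0 := by rintro rfl; rw [mul_zero] at h2; exact he h2.symm
  have hu2 : u₂ ≠ 0 := by rintro rfl; rw [zero_mul] at h2; exact he h2.symm
  have hN : u₂ ^ (m + 1) * b ^ (m + 1) * a ≠ 0 := by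
    apply mul_ne_zero (mul_ne_zero (pow_ne_zero _ hu2) (pow_ne_zero _ hb)) ha
  apply le_of_mul_le_mul_right _ (zero_lt_iff.2 hN)
  have e1 : x * (u₂ ^ (m + 1) * b ^ (m + 1) * a) = (C * b ^ (m + 1)) * (e ^ m * e) := by
    calc x * (u₂ ^ (m + 1) * b ^ (m + 1) * a)
        = (x * u₂ ^ (m + 1)) * (b ^ (m + 1) * a) := by
          simp [mul_assoc]
      _ = (u₁ * C * e ^ m) * (b ^ (m + 1) * a) := by rw [hx]
      _ = (C * b ^ (m + 1)) * (e ^ m * (u₁ * a)) := by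
          simp only [mul_assoc, mul_comm, mul_left_comm]
      _ = (C * b ^ (m + 1)) * (e ^ m * e) := by rw [h1]
  have e2 : 1 * (u₂ ^ (m + 1) * b ^ (m + 1) * a) = a * (e ^ m * e) := by
    calc 1 * (u₂ ^ (m + 1) * b ^ (m + 1) * a) = (u₂ * b) ^ (m + 1) * a := by
          rw [one_mul, mul_pow]
      _ = a * (e ^ m * e) := by rw [h2, ← pow_succ]; exact mul_comm _ _
  rw [e1, e2]
  apply mul_le_mul_left
  calc C * b ^ (m + 1) ≤ 1 * a := by
        apply mul_le_mul' hC
        rw [pow_succ]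
        calc b ^ m * b ≤ 1 * a := mul_le_mul' (pow_le_one' hb1 m) hba
          _ = a := one_mul a
    _ = a := one_mul a

lemma aux_integers (v : Valuation K Γ) : Valuation.Integers v v.valuationSubring :=
  { hom_inj := Subtype.coe_injective
    map_le_one := fun r => r.2
    exists_of_le_one := fun r hr => ⟨⟨r, hr⟩, rfl⟩ }

end auxx


lemma aux_residue {K : Type*} [Field K] {Γ : Type*} [LinearOrderedCommGroupWithZero Γ]
    (v : Valuation K Γ) {p : ℕ} (hp : p.Prime)
    (hres : CharP (IsLocalRing.ResidueField v.valuationSubring) p)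
    {x : K} (hx : v x ≤ 1) (hxp : v (x ^ p - 1) < 1) : v (x - 1) < 1 := by
  haveI := hres
  haveI := Fact.mk hp
  set O := v.valuationSubring
  have hInt : Valuation.Integers v O :=
    { hom_inj := Subtype.coe_injective
      map_le_one := fun r => r.2
      exists_of_le_one := fun r hr => ⟨⟨r, hr⟩, rfl⟩ }
  set x' : O := ⟨x, hx⟩ with hx'
  have hco : (algebraMap O K (x' ^ p - 1)) = x ^ p - 1 := by push_cast; rfl
  have hnu : ¬IsUnit (x' ^ p - 1) := by
    intro h
    have h2 := (hInt.isUnit_iff_valuation_eq_one).1 h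
    rw [hco] at h2
    rw [h2] at hxp
    exact lt_irrefl _ hxp
  have hr0 : IsLocalRing.residue O (x' ^ p - 1) = 0 := by
    rw [IsLocalRing.residue_eq_zero_iff]
    exact (IsLocalRing.mem_maximalIdeal _).2 hnu
  have hr1 : (IsLocalRing.residue O x' - 1) ^ p = 0 := by
    rw [sub_pow_char, one_pow]
    simpa [map_sub, map_pow] using hr0
  have hr2 : IsLocalRing.residue O (x' - 1) = 0 := by
    have := pow_eq_zero_iff hp.ne_zero |>.1 hr1
    rw [map_sub, map_one]
    exact this
  have hnu2 : ¬IsUnit (x' - 1) := by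
    have := (IsLocalRing.residue_eq_zero_iff _).1 hr2
    exact mem_nonunits_iff.1 ((IsLocalRing.mem_maximalIdeal _).1 this)
  have hle : v (x - 1) ≤ 1 := by
    refine le_trans (v.map_sub x 1) (max_le hx (le_of_eq v.map_one))
  rcases lt_or_eq_of_le hle with h | h
  · exact h
  · exfalso
    apply hnu2
    apply hInt.isUnit_of_one'
    have : algebraMap O K (x' - 1) = x - 1 := by push_cast; rfl
    rw [this, h]


open Polynomial IntermediateField

lemma aux_minpoly {p : ℕ} (hp : p.Prime) {K L : Type*} [Field K] [Field L] [Algebra K L]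
    [FiniteDimensional K L] (hdeg : Module.finrank K L = p)
    {β : L} {h : K} (hm : algebraMap K L h = β ^ p)
    (hg : IntermediateField.adjoin K {β} = ⊤) :
    minpoly K β = X ^ p - C h := by
  have hint : IsIntegral K β := IsIntegral.of_finite K β
  have hnd : (minpoly K β).natDegree = p := by
    rw [← IntermediateField.adjoin.finrank hint, hg, IntermediateField.finrank_top', hdeg]
  have hPm : (X ^ p - C h : K[X]).Monic := monic_X_pow_sub_C h hp.ne_zero
  have haev : Polynomial.aeval β (X ^ p - C h : K[X]) = 0 := by
    simp [map_sub, hm]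
  have hdvd : minpoly K β ∣ X ^ p - C h := minpoly.dvd K β haev
  obtain ⟨r, hr⟩ := hdvd
  have hmon : (minpoly K β).Monic := minpoly.monic hint
  have hr0 : r ≠ 0 := by
    intro h0
    rw [h0, mul_zero] at hr
    exact hPm.ne_zero hr
  have hrm : r.Monic := by
    have := hPm
    rw [hr] at this
    exact hmon.of_mul_monic_left this
  have hdeg' : r.natDegree = 0 := by
    have := congrArg Polynomial.natDegree hr
    rw [Polynomial.natDegree_mul (hmon.ne_zero) hr0] at this
    rw [Polynomial.natDegree_X_pow_sub_C, hnd] at this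
    omega
  have : r = 1 := hrm.natDegree_eq_zero.1 hdeg'
  rw [hr, this, mul_one]

lemma aux_kummer {p : ℕ} (hp : p.Prime) {K L : Type*} [Field K] [Field L] [Algebra K L]
    [FiniteDimensional K L] (hdeg : Module.finrank K L = p)
    {ζ : K} (hζ : IsPrimitiveRoot ζ p)
    {β₁ β₂ : L} {h₁ h₂ : K} (h₁0 : h₁ ≠ 0) (h₂0 : h₂ ≠ 0)
    (hm₁ : algebraMap K L h₁ = β₁ ^ p) (hm₂ : algebraMap K L h₂ = β₂ ^ p)
    (hg₁ : IntermediateField.adjoin K {β₁} = ⊤)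
    (hg₂ : IntermediateField.adjoin K {β₂} = ⊤) :
    ∃ (g : K) (q : ℕ), 0 < q ∧ q < p ∧ β₁ = algebraMap K L g * β₂ ^ q := by
  haveI : NeZero p := ⟨hp.ne_zero⟩
  have hβ₂int : IsIntegral K β₂ := IsIntegral.of_finite K β₂
  have hβ₁0 : β₁ ≠ 0 := by
    intro h0
    rw [h0, zero_pow hp.ne_zero] at hm₁
    exact h₁0 ((_root_.map_eq_zero (algebraMap K L)).1 hm₁)
  have hmin := aux_minpoly hp hdeg hm₂ hg₂
  -- power basis
  set e : K⟮β₂⟯ ≃ₐ[K] L := (IntermediateField.equivOfEq hg₂).trans IntermediateField.topEquiv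
    with he
  set pb : PowerBasis K L := (IntermediateField.adjoin.powerBasis hβ₂int).map e with hpb
  have hgen : pb.gen = β₂ := by
    simp [hpb, he, PowerBasis.map_gen]
  have hdim : pb.dim = p := by
    have := pb.finrank
    rw [hdeg] at this
    omega
  -- the automorphism
  have hζL : IsPrimitiveRoot (algebraMap K L ζ) p :=
    hζ.map_of_injective (algebraMap K L).injective
  have haev : Polynomial.aeval (algebraMap K L ζ * β₂) (minpoly K pb.gen) = 0 := by
    rw [hgen, hmin]
    simp only [map_sub, Polynomial.aeval_X_pow, Polynomial.aeval_C]
    rw [mul_pow, ← map_pow, hζ.pow_eq_one, map_one, one_mul, hm₂, sub_self]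
  set σ : L →ₐ[K] L := pb.lift (algebraMap K L ζ * β₂) haev with hσ
  have hσβ₂ : σ β₂ = algebraMap K L ζ * β₂ := by
    have := pb.lift_gen (algebraMap K L ζ * β₂) haev
    rw [hgen] at this
    exact this
  -- σ β₁ = ζ^q β₁
  have hσβ₁pow : (σ β₁) ^ p = β₁ ^ p := by
    rw [← map_pow, ← hm₁, AlgHom.commutes, hm₁]
  have hu : (σ β₁ / β₁) ^ p = 1 := by
    rw [div_pow, hσβ₁pow, div_self (pow_ne_zero _ hβ₁0)]
  obtain ⟨q, hqp, hq⟩ := hζL.eq_pow_of_pow_eq_one hu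
  have hσβ₁ : σ β₁ = algebraMap K L (ζ ^ q) * β₁ := by
    rw [map_pow, hq, div_mul_cancel₀ _ hβ₁0]
  -- coordinates
  set a : Fin pb.dim → K := fun i => pb.basis.repr β₁ i with ha
  have hrepr : β₁ = ∑ i : Fin pb.dim, a i • pb.gen ^ (i : ℕ) := by
    conv_lhs => rw [← pb.basis.sum_repr β₁]
    refine Finset.sum_congr rfl fun i _ => ?_
    rw [pb.coe_basis]
  -- apply σ
  have happ : ∑ i : Fin pb.dim, (ζ ^ q * a i) • pb.gen ^ (i : ℕ)
      = ∑ i : Fin pb.dim, (a i * ζ ^ (i : ℕ)) • pb.gen ^ (i : ℕ) := by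
    have h1 : σ β₁ = ∑ i : Fin pb.dim, (a i * ζ ^ (i : ℕ)) • pb.gen ^ (i : ℕ) := by
      rw [hrepr, map_sum]
      refine Finset.sum_congr rfl fun i _ => ?_
      rw [map_smul, map_pow, hgen, hσβ₂, mul_pow, ← map_pow]
      rw [Algebra.smul_def, Algebra.smul_def, map_mul]
      ring
    have h2 : σ β₁ = ∑ i : Fin pb.dim, (ζ ^ q * a i) • pb.gen ^ (i : ℕ) := by
      rw [hσβ₁, hrepr, Finset.mul_sum]
      refine Finset.sum_congr rfl fun i _ => ?_
      rw [Algebra.smul_def, Algebra.smul_def, map_mul]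
      ring
    rw [← h1, ← h2]
  have hcoef : ∀ i : Fin pb.dim, ζ ^ q * a i = a i * ζ ^ (i : ℕ) := by
    have hli := Fintype.linearIndependent_iff.1 pb.basis.linearIndependent
    have hzero : ∑ i : Fin pb.dim, (ζ ^ q * a i - a i * ζ ^ (i : ℕ)) • pb.basis i = 0 := by
      have : ∀ i : Fin pb.dim, (ζ ^ q * a i - a i * ζ ^ (i : ℕ)) • pb.basis i
          = (ζ ^ q * a i) • pb.gen ^ (i : ℕ) - (a i * ζ ^ (i : ℕ)) • pb.gen ^ (i : ℕ) := by
        intro i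
        rw [pb.coe_basis, sub_smul]
      rw [Finset.sum_congr rfl fun i _ => this i, Finset.sum_sub_distrib, happ, sub_self]
    intro i
    exact sub_eq_zero.1 (hli _ hzero i)
  -- conclude β₁ = g • β₂ ^ q
  set i₀ : Fin pb.dim := ⟨q, by rw [hdim]; exact hqp⟩ with hi₀
  have hvanish : ∀ i : Fin pb.dim, i ≠ i₀ → a i • pb.gen ^ (i : ℕ) = 0 := by
    intro i hi
    have hi' : (i : ℕ) ≠ q := by
      intro hcon
      apply hi
      apply Fin.ext
      rw [hcon]
    have : a i = 0 := by
      by_contra hai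
      have heq : ζ ^ (i : ℕ) = ζ ^ q := by
        have := hcoef i
        field_simp at this
        rcases mul_eq_mul_left_iff.1 (by linear_combination (a i) * this : a i * ζ ^ q = a i * ζ ^ (i:ℕ)) with h | h
        · exact h.symm
        · exact absurd h hai
      exact hi' (hζ.pow_inj (by rw [← hdim]; exact i.2) hqp heq)
    rw [this, zero_smul]
  have hβ₁eq : β₁ = a i₀ • β₂ ^ q := by
    rw [hrepr, Finset.sum_eq_single i₀ (fun i _ hi => hvanish i hi) (by intro h; exact absurd (Finset.mem_univ i₀) h), hgen]
  have hq0 : q ≠ 0 := by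
    intro hq0
    have : β₁ = algebraMap K L (a i₀) := by
      rw [hβ₁eq, hq0, pow_zero, Algebra.smul_def, mul_one]
    have hbot : IntermediateField.adjoin K {β₁} ≤ ⊥ := by
      rw [IntermediateField.adjoin_le_iff, Set.singleton_subset_iff, this]
      exact IntermediateField.algebraMap_mem ⊥ _
    have hbot' : (⊥ : IntermediateField K L) = ⊤ := le_antisymm bot_le (hg₁ ▸ hbot)
    have h1 : Module.finrank K (⊥ : IntermediateField K L) = 1 :=
      IntermediateField.finrank_bot
    rw [hbot', IntermediateField.finrank_top', hdeg] at h1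
    exact hp.one_lt.ne' h1
  refine ⟨a i₀, q, Nat.pos_of_ne_zero hq0, hqp, ?_⟩
  rw [hβ₁eq, Algebra.smul_def]


/-- basic facts about elements of `kummerGens`. -/
lemma aux_gens {p : ℕ} (hp : p.Prime) {K L : Type*} [Field K] [Field L] [Algebra K L]
    {Γ : Type*} [LinearOrderedCommGroupWithZero Γ] (v : Valuation K Γ)
    {ζ : K} (hζ : IsPrimitiveRoot ζ p)
    (w : Valuation L Γ) (hw : ∀ x : K, w (algebraMap K L x) = v x)
    {β : L} (hβ : β ∈ kummerGens p L v) :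
    w β = 1 ∧ IntermediateField.adjoin K {β} = ⊤ := by
  obtain ⟨h, ⟨β', hβ'pow, hβ'gen⟩, hvh, hvh1, hmap⟩ := hβ
  haveI : NeZero p := ⟨hp.ne_zero⟩
  have hh0 : h ≠ 0 := by
    intro h0; rw [h0, Valuation.map_zero] at hvh; exact zero_ne_one hvh
  have hβ0 : β ≠ 0 := by
    intro h0
    rw [h0, zero_pow hp.ne_zero] at hmap
    exact hh0 ((_root_.map_eq_zero (algebraMap K L)).1 hmap)
  have hwβ : w β = 1 := by
    apply aux_pow_eq_one (by simpa using hβ0) hp.ne_zero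
    rw [← map_pow, ← hmap, hw, hvh]
  refine ⟨hwβ, ?_⟩
  -- β = ζ^i • β' for some i
  have hβ'0 : β' ≠ 0 := by
    intro h0
    rw [h0, zero_pow hp.ne_zero] at hβ'pow
    exact hh0 ((_root_.map_eq_zero (algebraMap K L)).1 hβ'pow.symm)
  have hζL : IsPrimitiveRoot (algebraMap K L ζ) p :=
    hζ.map_of_injective (algebraMap K L).injective
  have hu : (β / β') ^ p = 1 := by
    rw [div_pow, hβ'pow, ← hmap, div_self]
    rw [hmap]
    exact pow_ne_zero _ hβ0
  obtain ⟨i, hip, hi⟩ := hζL.eq_pow_of_pow_eq_one hu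
  have hβeq : β = algebraMap K L (ζ ^ i) * β' := by
    rw [map_pow, hi]
    exact (div_mul_cancel₀ β hβ'0).symm
  have hζi0 : (ζ : K) ^ i ≠ 0 := pow_ne_zero _ (hζ.ne_zero hp.ne_zero)
  rw [eq_top_iff, ← hβ'gen]
  rw [IntermediateField.adjoin_le_iff]
  rw [Set.singleton_subset_iff]
  have hβmem : β ∈ IntermediateField.adjoin K {β} := by
    exact IntermediateField.mem_adjoin_simple_self K β
  have : β' = algebraMap K L (ζ ^ i)⁻¹ * β := by
    rw [hβeq, map_inv₀, inv_mul_cancel_left₀ ((map_ne_zero (algebraMap K L)).2 hζi0)]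
  rw [this]
  exact mul_mem (IntermediateField.algebraMap_mem _ _) hβmem

lemma aux_sub_one_lt {p : ℕ} (hp : p.Prime) {K L : Type*} [Field K] [Field L] [Algebra K L]
    {Γ : Type*} [LinearOrderedCommGroupWithZero Γ]
    (v : Valuation K Γ) (w : Valuation L Γ) (hw : ∀ x : K, w (algebraMap K L x) = v x)
    (hres : CharP (IsLocalRing.ResidueField v.valuationSubring) p)
    (hdef : ∀ y : L, w y ≤ 1 → ∃ x : K, v x ≤ 1 ∧ w (y - algebraMap K L x) < 1)
    {β : L} {h : K} (hvh : v h = 1) (hvh1 : v (h - 1) < 1)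
    (hmap : algebraMap K L h = β ^ p) (hwβ : w β = 1) :
    w (β - 1) < 1 := by
  obtain ⟨x, hx1, hx2⟩ := hdef β (le_of_eq hwβ)
  set t : L := algebraMap K L x with ht
  have hwt : w t = v x := hw x
  -- v x = 1
  have hvx : v x = 1 := by
    rcases lt_or_eq_of_le hx1 with hlt | heq
    · exfalso
      have : w β ≤ max (w (β - t)) (w t) := by
        have : β = (β - t) + t := by ring
        calc w β = w ((β - t) + t) := by rw [← this]
          _ ≤ max (w (β - t)) (w t) := w.map_add _ _
      rw [hwβ] at this
      rcases max_cases (w (β - t)) (w t) with ⟨hm, _⟩ | ⟨hm, _⟩ <;> rw [hm] at this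
      · exact absurd this (not_le.2 hx2)
      · rw [hwt] at this; exact absurd this (not_le.2 hlt)
    · exact heq
  -- v (x^p - h) < 1
  have hgeom : (∑ i ∈ Finset.range p, t ^ i * β ^ (p - 1 - i)) * (t - β) = t ^ p - β ^ p :=
    geom_sum₂_mul t β p
  have hsum : w (∑ i ∈ Finset.range p, t ^ i * β ^ (p - 1 - i)) ≤ 1 := by
    apply Valuation.map_sum_le
    intro i _
    rw [map_mul, map_pow, map_pow, hwt, hvx, hwβ, one_pow, one_pow, one_mul]
  have hxph : v (x ^ p - h) < 1 := by
    have hmap' : algebraMap K L (x ^ p - h) = t ^ p - β ^ p := by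
      rw [map_sub, map_pow, hmap, ht]
    rw [← hw, hmap', ← hgeom, map_mul]
    calc w (∑ i ∈ Finset.range p, t ^ i * β ^ (p - 1 - i)) * w (t - β)
        ≤ 1 * w (t - β) := mul_le_mul_left hsum _
      _ = w (t - β) := one_mul _
      _ = w (β - t) := by rw [← Valuation.map_neg, neg_sub]
      _ < 1 := hx2
  -- v (x^p - 1) < 1
  have hxp1 : v (x ^ p - 1) < 1 := by
    have : x ^ p - 1 = (x ^ p - h) + (h - 1) := by ring
    rw [this]
    exact lt_of_le_of_lt (v.map_add _ _) (max_lt hxph hvh1)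
  have hx1lt := aux_residue v hp hres hx1 hxp1
  have : β - 1 = (β - t) + (t - 1) := by ring
  rw [this]
  refine lt_of_le_of_lt (w.map_add _ _) (max_lt hx2 ?_)
  have : t - 1 = algebraMap K L (x - 1) := by rw [map_sub, map_one]
  rw [this, hw]
  exact hx1lt

end Auxiliary

/-- Lemma 5.3 of the paper: if `α₁, α₂ ∈ 𝒮` and
`v(α₁ − 1) ≤ v(α₂ − 1)` (additively), then `A[α₁'] ⊆ A[α₂']`. -/
theorem statement9
    (p : ℕ) (hp : p.Prime)
    (K : Type*) [Field K] [CharZero K]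
    (Γ : Type*) [LinearOrderedCommGroupWithZero Γ]
    (v : Valuation K Γ) [HenselianLocalRing v.valuationSubring]
    (hres : CharP (IsLocalRing.ResidueField v.valuationSubring) p)
    (ζ : K) (hζ : IsPrimitiveRoot ζ p)
    (L : Type*) [Field L] [Algebra K L] [FiniteDimensional K L]
    (hdeg : Module.finrank K L = p)
    (α₀ : L) (h₀ : K) (hh₀ : h₀ ≠ 0) (hα₀ : α₀ ^ p = algebraMap K L h₀)
    (hgen : IntermediateField.adjoin K {α₀} = ⊤)
    (w : Valuation L Γ) (hw : ∀ x : K, w (algebraMap K L x) = v x)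
    (hdefect : HasDefect v w)
    (γ : L → K)
    (hγ : ∀ β ∈ kummerGens p L v, v (γ β) ≤ 1 ∧ w (primed ζ (γ β) β) = 1)
    (β₁ : L) (hβ₁ : β₁ ∈ kummerGens p L v)
    (β₂ : L) (hβ₂ : β₂ ∈ kummerGens p L v)
    -- additive v(α₁ − 1) ≤ v(α₂ − 1), multiplicatively reversed:
    (hle : w (β₂ - 1) ≤ w (β₁ - 1)) :
    adjoinRing L v (primed ζ (γ β₁) β₁) ≤ adjoinRing L v (primed ζ (γ β₂) β₂) := by
  classical
  obtain ⟨h₁, hk₁, hvh₁, hvh₁1, hmap₁⟩ := id hβ₁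
  obtain ⟨h₂, hk₂, hvh₂, hvh₂1, hmap₂⟩ := id hβ₂
  have h₁0 : h₁ ≠ 0 := by intro h0; rw [h0, Valuation.map_zero] at hvh₁; exact zero_ne_one hvh₁
  have h₂0 : h₂ ≠ 0 := by intro h0; rw [h0, Valuation.map_zero] at hvh₂; exact zero_ne_one hvh₂
  obtain ⟨hwβ₁, hgen₁⟩ := aux_gens hp v hζ w hw hβ₁
  obtain ⟨hwβ₂, hgen₂⟩ := aux_gens hp v hζ w hw hβ₂
  obtain ⟨g, q, hq0, hqp, hβ₁g⟩ := aux_kummer hp hdeg hζ h₁0 h₂0 hmap₁ hmap₂ hgen₁ hgen₂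
  obtain ⟨hγ₁le, hγ₁w⟩ := hγ β₁ hβ₁
  obtain ⟨hγ₂le, hγ₂w⟩ := hγ β₂ hβ₂
  set γ₁ := γ β₁ with hγ₁def
  set γ₂ := γ β₂ with hγ₂def
  have hζ1 : ζ - 1 ≠ 0 := sub_ne_zero.2 (hζ.ne_one hp.one_lt)
  have hvz : v (ζ - 1) ≠ 0 := v.ne_zero_iff.2 hζ1
  have hz0 : algebraMap K L (ζ - 1) ≠ 0 := (map_ne_zero _).2 hζ1
  have hrel₁ : v γ₁ * w (β₁ - 1) = v (ζ - 1) := by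
    have h := hγ₁w
    rw [primed, map_div₀, map_mul, hw, hw] at h
    exact (div_eq_one_iff_eq hvz).1 h
  have hrel₂ : v γ₂ * w (β₂ - 1) = v (ζ - 1) := by
    have h := hγ₂w
    rw [primed, map_div₀, map_mul, hw, hw] at h
    exact (div_eq_one_iff_eq hvz).1 h
  have hγ₂0 : γ₂ ≠ 0 := by
    intro h0
    rw [h0, Valuation.map_zero, zero_mul] at hrel₂
    exact hvz hrel₂.symm
  have hγ₂L : algebraMap K L γ₂ ≠ 0 := (map_ne_zero _).2 hγ₂0
  have hlt₂ : w (β₂ - 1) < 1 :=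
    aux_sub_one_lt hp v w hw hres hdefect.2 hvh₂ hvh₂1 hmap₂ hwβ₂
  have hg1 : v g = 1 := by
    have h : w β₁ = v g * (w β₂) ^ q := by
      rw [hβ₁g, map_mul, map_pow, hw]
    rw [hwβ₁, hwβ₂, one_pow, mul_one] at h
    exact h.symm
  set c : ℕ → K := fun m => if m = 0 then γ₁ * (g - 1) / (ζ - 1)
    else γ₁ * g * (q.choose m) * (ζ - 1) ^ (m - 1) / γ₂ ^ m with hc
  -- the algebraic identity
  have hkey : primed ζ γ₁ β₁
      = ∑ m ∈ Finset.range (q + 1), algebraMap K L (c m) * (primed ζ γ₂ β₂) ^ m := by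
    have hterm : ∀ i ∈ Finset.range q,
        algebraMap K L (c (i + 1)) * (primed ζ γ₂ β₂) ^ (i + 1)
        = algebraMap K L γ₁ * algebraMap K L g
            * ((β₂ - 1) ^ (i + 1) * ((q.choose (i + 1) : L))) / algebraMap K L (ζ - 1) := by
      intro i _
      rw [hc]
      simp only [Nat.succ_ne_zero, if_false, Nat.add_sub_cancel]
      rw [primed]
      rw [map_div₀, map_mul, map_mul, map_mul, map_pow, map_pow, map_natCast]
      generalize hZ : algebraMap K L (ζ - 1) = Z at hz0 ⊢
      generalize hG : algebraMap K L γ₂ = G at hγ₂L ⊢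
      rw [div_pow, mul_pow]
      field_simp
      ring
    rw [Finset.sum_range_succ', Finset.sum_congr rfl hterm]
    have hc0t : algebraMap K L (c 0) * (primed ζ γ₂ β₂) ^ 0
        = (algebraMap K L γ₁ * algebraMap K L g - algebraMap K L γ₁) / algebraMap K L (ζ - 1) := by
      have hceq0 : c 0 = γ₁ * (g - 1) / (ζ - 1) := by rw [hc]; norm_num
      rw [hceq0, pow_zero, mul_one]
      rw [map_div₀, map_mul, map_sub, map_one]
      ring
    rw [hc0t, primed, hβ₁g]
    have hb2 : β₂ = (β₂ - 1) + 1 := by ring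
    rw [hb2, add_pow]
    simp only [one_pow, mul_one]
    rw [Finset.sum_range_succ']
    simp only [pow_zero, Nat.choose_zero_right, Nat.cast_one, one_mul]
    rw [← Finset.sum_div, ← Finset.mul_sum]
    generalize hZ : algebraMap K L (ζ - 1) = Z at hz0 ⊢
    field_simp
    ring
  -- coefficient bounds
  have hcm : ∀ i : ℕ, v (c (i + 1)) ≤ 1 := by
    intro i
    have hceq : c (i + 1) * γ₂ ^ (i + 1) = γ₁ * g * (q.choose (i + 1) : K) * (ζ - 1) ^ i := by
      rw [hc]
      simp only [Nat.succ_ne_zero, if_false, Nat.add_sub_cancel]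
      field_simp
    have hv := congrArg v hceq
    simp only [map_mul, map_pow] at hv
    rw [hg1, mul_one] at hv
    exact aux_gamma i hrel₁ hrel₂ hvz (aux_val_natCast_le_one v _) hle (le_of_lt hlt₂) hv
  have hwP₂ : w (primed ζ (γ β₂) β₂) = 1 := hγ₂w
  have hc0 : v (c 0) ≤ 1 := by
    have hrw : algebraMap K L (c 0) = primed ζ γ₁ β₁
        - ∑ i ∈ Finset.range q, algebraMap K L (c (i + 1)) * (primed ζ γ₂ β₂) ^ (i + 1) := by
      rw [hkey, Finset.sum_range_succ']
      simp only [pow_zero, mul_one]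
      ring
    rw [← hw, hrw]
    refine le_trans (w.map_sub _ _) (max_le (le_of_eq hγ₁w) ?_)
    apply Valuation.map_sum_le
    intro i _
    rw [map_mul, map_pow, hwP₂, one_pow, mul_one, hw]
    exact hcm i
  -- memberships
  have hA : ∀ x : K, v x ≤ 1 → algebraMap K L x ∈ adjoinRing L v (primed ζ (γ β₂) β₂) := by
    intro x hx
    exact Subring.subset_closure (Or.inl ⟨x, hx, rfl⟩)
  have hP₂ : primed ζ (γ β₂) β₂ ∈ adjoinRing L v (primed ζ (γ β₂) β₂) :=
    Subring.subset_closure (Or.inr rfl)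
  have hP₁ : primed ζ (γ β₁) β₁ ∈ adjoinRing L v (primed ζ (γ β₂) β₂) := by
    rw [hkey]
    apply Subring.sum_mem
    intro m _
    apply Subring.mul_mem
    · cases m with
      | zero => exact hA _ hc0
      | succ i => exact hA _ (hcm i)
    · exact Subring.pow_mem _ hP₂ _
  rw [adjoinRing, Subring.closure_le]
  rintro x (⟨y, hy, rfl⟩ | rfl)
  · exact hA y hy
  · exact hP₁
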